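/- Let M be a model of the theory T_n (as in Definition of the dense-levels theory) in which |P₀^M| = λ. Then |Q_m^M| ≤ ded(|P_m^M|) ≤ ℶ_{m+1}(λ) and |P_{m+1}^M| = |Q_m^M \ P_m^M|; consequently |M| ≤ ℶ_n(λ). In particular T_n has no model M with |P₀^M| = ℵ₀ and |M| ≥ ℶ_ω. -/

import Mathlib

open Cardinal

universe u

/-- `D` is a dense subset of the linear order `α`: between any two elements of `α`
there is an element of `D`. -/
def IsDenseSub {α : Type u} [LinearOrder α] (D : Set α) : Prop :=
  ∀ a b : α, a < b → ∃ d ∈ D, a ≤ d ∧ d ≤ b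

/-- `ded κ`: the supremum of the cardinalities of linear orders having a dense subset
of size at most `κ`. -/
noncomputable def ded (κ : Cardinal.{u}) : Cardinal.{u} :=
  sSup {c : Cardinal.{u} | ∃ (α : Type u) (_ : LinearOrder α) (D : Set α),
    IsDenseSub D ∧ #D ≤ κ ∧ c = #α}


/-- A model of the theory `T_n`: linearly ordered levels `Q_m` (here the types `A m`),
each a dense linear order without endpoints, with a dense-codense subset `P m`,
bijections `e m` from `P (m+1)` onto `Q m \ P m`, satisfying the mixing density axiom. -/
structure TnModel (n : ℕ) where
  A : ℕ → Type u
  [ord : ∀ m, LinearOrder (A m)]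
  P : ∀ m, Set (A m)
  dlo : ∀ m, m < n → DenselyOrdered (A m)
  nomin : ∀ m, m < n → NoMinOrder (A m)
  nomax : ∀ m, m < n → NoMaxOrder (A m)
  dense : ∀ m, m < n → ∀ a b : A m, a < b → ∃ d ∈ P m, a < d ∧ d < b
  codense : ∀ m, m < n → ∀ a b : A m, a < b → ∃ d ∈ (P m)ᶜ, a < d ∧ d < b
  e : ∀ m, m + 1 < n → (↥(P (m + 1)) ≃ ↥((P m)ᶜ))
  mixing : ∀ m, ∀ h : m + 1 < n,
    ∀ a₂ c₂ : ↥(P (m + 1)), a₂ < c₂ →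
      ∀ a₁ c₁ : ↥((P m)ᶜ), a₁ < c₁ →
        ∃ b₂ : ↥(P (m + 1)), a₂ < b₂ ∧ b₂ < c₂ ∧ a₁ < e m h b₂ ∧ e m h b₂ < c₁

attribute [instance] TnModel.ord

/-- Iterated beth: `ℶ₀(κ) = κ`, `ℶ_{k+1}(κ) = 2^{ℶ_k(κ)}`. -/
def bethN : ℕ → Cardinal.{u} → Cardinal.{u}
  | 0, κ => κ
  | k + 1, κ => 2 ^ bethN k κ

/-- A set that is "strictly dense" in a nonempty order without maximum is infinite. -/
lemma inf_of_between {α : Type u} [LinearOrder α] [Nonempty α] [NoMaxOrder α] {S : Set α}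
    (h : ∀ a b : α, a < b → ∃ d ∈ S, a < d ∧ d < b) : ℵ₀ ≤ #S := by
  rw [← Cardinal.infinite_iff, Set.infinite_coe_iff]
  intro hfin
  obtain ⟨a₀⟩ := ‹Nonempty α›
  obtain ⟨b₀, hb₀⟩ := exists_gt a₀
  obtain ⟨d₀, hd₀, -⟩ := h a₀ b₀ hb₀
  obtain ⟨d, hdS, hmax⟩ := (Set.finite_coe_iff.mp hfin).exists_maximal ⟨d₀, hd₀⟩
  obtain ⟨b, hb⟩ := exists_gt d
  obtain ⟨d', hd'S, hdd', -⟩ := h d b hb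
  exact absurd (hmax hd'S hdd'.le) (not_le.mpr hdd')

/-- Cut-counting: a linear order with a dense subset `D` has size at most `2^|D| * 2^|D|`. -/
lemma mk_le_of_denseSub {α : Type u} [LinearOrder α] {D : Set α} (h : IsDenseSub D) :
    #α ≤ 2 ^ #D * 2 ^ #D := by
  set F : α → Set D × Set D := fun a => ({d : D | (d : α) < a}, {d : D | (d : α) ≤ a}) with hF
  have key : ∀ a b : α, a < b → F a ≠ F b := by
    intro a b hlt heq
    obtain ⟨d, hdD, had, hdb⟩ := h a b hlt
    have h1 : {d : D | (d : α) < a} = {d : D | (d : α) < b} := congrArg Prod.fst heq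
    have h2 : {d : D | (d : α) ≤ a} = {d : D | (d : α) ≤ b} := congrArg Prod.snd heq
    rcases eq_or_lt_of_le had with rfl | h'
    · have hmem : (⟨a, hdD⟩ : D) ∈ {d : D | (d : α) < b} := hlt
      rw [← h1] at hmem
      exact lt_irrefl _ hmem
    · have hmem : (⟨d, hdD⟩ : D) ∈ {d : D | (d : α) ≤ b} := hdb
      rw [← h2] at hmem
      exact absurd h' (not_lt.mpr hmem)
  have hinj : Function.Injective F := by
    intro a b hab
    rcases lt_trichotomy a b with h' | h' | h'
    · exact absurd hab (key a b h')
    · exact h'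
    · exact absurd hab.symm (key b a h')
  simpa using Cardinal.mk_le_of_injective hinj

lemma ded_bddAbove (κ : Cardinal.{u}) :
    (2 ^ κ * 2 ^ κ) ∈ upperBounds {c : Cardinal.{u} | ∃ (α : Type u) (_ : LinearOrder α)
      (D : Set α), IsDenseSub D ∧ #D ≤ κ ∧ c = #α} := by
  rintro c ⟨α, _, D, hD, hκ, rfl⟩
  refine (mk_le_of_denseSub hD).trans ?_
  have := Cardinal.power_le_power_left (two_ne_zero) hκ
  exact mul_le_mul' this this

lemma le_ded {α : Type u} [LinearOrder α] {D : Set α} (h : IsDenseSub D) {κ : Cardinal.{u}}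
    (hκ : #D ≤ κ) : #α ≤ ded κ :=
  le_csSup ⟨_, ded_bddAbove κ⟩ ⟨α, ‹_›, D, h, hκ, rfl⟩

lemma ded_le {κ : Cardinal.{u}} (hκ : κ + κ = κ) : ded κ ≤ 2 ^ κ := by
  refine csSup_le' ?_
  have : (2 : Cardinal.{u}) ^ κ * 2 ^ κ = 2 ^ κ := by
    rw [← Cardinal.power_add, hκ]
  rw [← this]
  exact ded_bddAbove κ

lemma bethN_mono (lam : Cardinal.{u}) : Monotone (fun k => bethN k lam) :=
  monotone_nat_of_le_succ fun k => (Cardinal.cantor (bethN k lam)).le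

lemma bethN_aleph0 : ∀ k : ℕ, bethN.{u} k ℵ₀ = Cardinal.beth k := by
  intro k
  induction k with
  | zero => simp [bethN]
  | succ k ih =>
      rw [show ((k + 1 : ℕ) : Ordinal) = Order.succ (k : Ordinal) by
            rw [Nat.cast_add_one, Ordinal.add_one_eq_succ],
        Cardinal.beth_succ, ← ih]
      rfl

theorem stmt13 (n : ℕ) (hn : 0 < n) (M : TnModel.{u} n) (lam : Cardinal.{u})
    (hP0 : #(M.P 0) = lam) :
    (∀ m < n, #(M.A m) ≤ ded #(M.P m) ∧ ded #(M.P m) ≤ bethN (m + 1) lam) ∧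
    (∀ m, m + 1 < n → #(M.P (m + 1)) = #↥((M.P m)ᶜ)) ∧
    Cardinal.sum (fun m : Fin n => #(M.A m)) ≤ bethN n lam ∧
    (lam = ℵ₀ → Cardinal.sum (fun m : Fin n => #(M.A m)) < Cardinal.beth Ordinal.omega0) := by
  have hdich : ∀ m, m < n → (#(M.P m) = 0 ∧ #(M.A m) = 0) ∨
      (ℵ₀ ≤ #(M.P m) ∧ ℵ₀ ≤ #(↥((M.P m)ᶜ))) := by
    intro m hm
    rcases isEmpty_or_nonempty (M.A m) with hE | hN
    · exact Or.inl ⟨Cardinal.mk_eq_zero _, Cardinal.mk_eq_zero _⟩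
    · haveI := M.nomax m hm
      exact Or.inr ⟨inf_of_between (fun a b h => M.dense m hm a b h),
        inf_of_between (fun a b h => M.codense m hm a b h)⟩
  have hDS : ∀ m, m < n → IsDenseSub (M.P m) := by
    intro m hm a b hab
    obtain ⟨d, h1, h2, h3⟩ := M.dense m hm a b hab
    exact ⟨d, h1, h2.le, h3.le⟩
  have hadd : ∀ m, m < n → #(M.P m) + #(M.P m) = #(M.P m) := by
    intro m hm
    rcases hdich m hm with ⟨h0, -⟩ | ⟨h0, -⟩
    · rw [h0]; simp
    · exact Cardinal.add_eq_self h0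
  have hPle : ∀ m, m < n → #(M.P m) ≤ bethN m lam := by
    intro m
    induction m with
    | zero => exact fun _ => hP0.le
    | succ k ih =>
        intro hk
        have hk' : k < n := Nat.lt_of_succ_lt hk
        calc #(M.P (k + 1)) = #(↥((M.P k)ᶜ)) := Cardinal.mk_congr (M.e k hk)
          _ ≤ #(M.A k) := Cardinal.mk_set_le _
          _ ≤ ded #(M.P k) := le_ded (hDS k hk') le_rfl
          _ ≤ 2 ^ #(M.P k) := ded_le (hadd k hk')
          _ ≤ 2 ^ bethN k lam := Cardinal.power_le_power_left two_ne_zero (ih hk')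
          _ = bethN (k + 1) lam := rfl
  have hmain : ∀ m < n, #(M.A m) ≤ ded #(M.P m) ∧ ded #(M.P m) ≤ bethN (m + 1) lam := by
    intro m hm
    exact ⟨le_ded (hDS m hm) le_rfl,
      (ded_le (hadd m hm)).trans (Cardinal.power_le_power_left two_ne_zero (hPle m hm))⟩
  have hsum : Cardinal.sum (fun m : Fin n => #(M.A m)) ≤ bethN n lam := by
    rcases hdich 0 hn with ⟨h0, hA0⟩ | ⟨h0, -⟩
    · -- everything is empty
      have hz : ∀ m, m < n → #(M.A m) = 0 := by
        intro m
        induction m with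
        | zero => exact fun _ => hA0
        | succ k ih =>
            intro hk
            have hk' : k < n := Nat.lt_of_succ_lt hk
            have hPz : #(M.P (k + 1)) = 0 := by
              refine le_antisymm ?_ zero_le
              calc #(M.P (k + 1)) = #(↥((M.P k)ᶜ)) := Cardinal.mk_congr (M.e k hk)
                _ ≤ #(M.A k) := Cardinal.mk_set_le _
                _ ≤ 0 := (ih hk').le
            rcases hdich (k + 1) hk with ⟨-, h⟩ | ⟨h, -⟩
            · exact h
            · rw [hPz] at h
              exact absurd (le_zero_iff.mp h) Cardinal.aleph0_ne_zero
      have : Cardinal.sum (fun m : Fin n => #(M.A m)) ≤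
          Cardinal.sum (fun _ : Fin n => (0 : Cardinal.{u})) :=
        Cardinal.sum_le_sum _ _ fun i => (hz i i.isLt).le
      refine le_trans ?_ zero_le
      simpa using this
    · have hlam : ℵ₀ ≤ lam := hP0 ▸ h0
      have hbig : ℵ₀ ≤ bethN n lam := hlam.trans (bethN_mono lam (Nat.zero_le n))
      calc Cardinal.sum (fun m : Fin n => #(M.A m))
          ≤ Cardinal.sum (fun _ : Fin n => bethN n lam) := by
            refine Cardinal.sum_le_sum _ _ fun i => ?_
            exact ((hmain i i.isLt).1.trans ((hmain i i.isLt).2.trans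
              (bethN_mono lam (Nat.succ_le_of_lt i.isLt))))
        _ = (n : Cardinal.{u}) * bethN n lam := by
            simp [Cardinal.sum_const]
        _ = bethN n lam := Cardinal.mul_eq_right hbig
            ((Cardinal.nat_lt_aleph0 n).le.trans hbig)
            (Nat.cast_ne_zero.mpr hn.ne')
  refine ⟨hmain, fun m h => Cardinal.mk_congr (M.e m h), hsum, ?_⟩
  intro hlam
  subst hlam
  calc Cardinal.sum (fun m : Fin n => #(M.A m)) ≤ bethN n ℵ₀ := hsum
    _ = Cardinal.beth (n : Ordinal) := bethN_aleph0 n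
    _ < Cardinal.beth Ordinal.omega0 := by
        exact Cardinal.beth_strictMono (Ordinal.nat_lt_omega0 n)
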